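/- Let 𝕂 ∈ {ℝ, ℂ} and let σ : 𝕂 → 𝕂 be entire with σ(z) = ∑_{k=0}^∞ α_k z^k for all z ∈ 𝕂. Suppose α_M ≠ 0 for some M ∈ ℕ, and let 0 ≤ m ≤ M. Then for every R > 0 and ε > 0 there exists a one-dimensional shallow neural network f ∈ M_σ (with d = 1) such that sup_{|z| ≤ R} |f(z) − z^m| ≤ ε. -/

import Mathlib

open scoped BigOperators

/-- Finite sums of `HasSum` families. -/
lemma myHasSum_finset_sum {𝕂 : Type} [RCLike 𝕂] {ι : Type} [DecidableEq ι]
    (s : Finset ι) (f : ι → ℕ → 𝕂) (S : ι → 𝕂) (h : ∀ i ∈ s, HasSum (f i) (S i)) :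
    HasSum (fun k => ∑ i ∈ s, f i k) (∑ i ∈ s, S i) := by
  induction s using Finset.induction with
  | empty => simpa using hasSum_zero
  | @insert x s hx ih =>
    simp only [Finset.sum_insert hx]
    exact (h x (Finset.mem_insert_self _ _)).add
      (ih fun i hi => h i (Finset.mem_insert_of_mem hi))

/-- Absolute convergence of the coefficient series at any nonneg radius. -/
lemma mySummable_norm {𝕂 : Type} [RCLike 𝕂] (α : ℕ → 𝕂)
    (hσ : ∀ z : 𝕂, Summable (fun k : ℕ => α k * z ^ k)) (r : ℝ) (hr : 0 ≤ r) :
    Summable (fun k => ‖α k‖ * r ^ k) := by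
  have hzr : (0:ℝ) < 2 * r + 1 := by linarith
  set z : 𝕂 := ((2 * r + 1 : ℝ) : 𝕂) with hzdef
  have hz : ‖z‖ = 2 * r + 1 := by rw [RCLike.norm_ofReal, abs_of_pos hzr]
  have htend : Filter.Tendsto (fun k => ‖α k * z ^ k‖) Filter.atTop (nhds 0) := by
    simpa using (hσ z).tendsto_atTop_zero.norm
  have hev : ∀ᶠ k in Filter.atTop, ‖α k * z ^ k‖ ≤ 1 :=
    htend.eventually_le_const one_pos
  set q : ℝ := r / (2 * r + 1) with hq
  have hq0 : 0 ≤ q := div_nonneg hr hzr.le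
  have hq1 : q < 1 := (div_lt_one hzr).2 (by linarith)
  refine Summable.of_norm_bounded_eventually_nat (g := fun k => q ^ k)
    (summable_geometric_of_lt_one hq0 hq1) ?_
  filter_upwards [hev] with k hk
  have hrq : q * (2 * r + 1) = r := div_mul_cancel₀ r hzr.ne'
  have : ‖α k‖ * r ^ k = ‖α k * z ^ k‖ * q ^ k := by
    rw [norm_mul, norm_pow, hz, mul_assoc, ← mul_pow, mul_comm (2 * r + 1) q, hrq]
  rw [Real.norm_eq_abs, abs_of_nonneg (by positivity)]
  rw [this]
  calc ‖α k * z ^ k‖ * q ^ k ≤ 1 * q ^ k := by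
        exact mul_le_mul_of_nonneg_right hk (by positivity)
    _ = q ^ k := one_mul _

lemma myExp_inj (M m i k : ℕ) (hm : m ≤ M) (hik : i ≤ k) (hkM : k ≤ M) :
    (i + (M + 1) * (k - i) = m + (M + 1) * (M - m)) ↔ (i = m ∧ k = M) := by
  constructor
  · intro h
    have hmod : i % (M + 1) = m % (M + 1) := by
      have := congrArg (fun x => x % (M + 1)) h
      simpa [Nat.add_mul_mod_self_left] using this
    have hi : i = m := by
      rwa [Nat.mod_eq_of_lt (by omega), Nat.mod_eq_of_lt (by omega)] at hmod
    subst hi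
    have h2 : (M + 1) * (k - i) = (M + 1) * (M - i) := by omega
    have := Nat.eq_of_mul_eq_mul_left (by omega) h2
    omega
  · rintro ⟨rfl, rfl⟩
    rfl

open Matrix in
lemma myVandermonde_solution {𝕂 : Type} [RCLike 𝕂] (n : ℕ) (e₀ : ℕ) (he₀ : e₀ < n) :
    ∃ a : Fin n → 𝕂, ∀ e : ℕ, e < n →
      ∑ j, a j * (((j : ℕ) : 𝕂) + 1) ^ e = if e = e₀ then 1 else 0 := by
  set s : Fin n → 𝕂 := fun j => ((j : ℕ) : 𝕂) + 1 with hs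
  have hinj : Function.Injective s := by
    intro i j h
    have : ((i : ℕ) : 𝕂) = ((j : ℕ) : 𝕂) := by
      simpa [hs] using h
    exact Fin.val_injective (Nat.cast_injective this)
  set W : Matrix (Fin n) (Fin n) 𝕂 := Matrix.of fun e j => s j ^ (e : ℕ) with hW
  have hWt : Wᵀ = Matrix.vandermonde s := by
    ext i j; simp [hW, Matrix.vandermonde]
  have hdet : W.det ≠ 0 := by
    rw [← Matrix.det_transpose, hWt]
    exact Matrix.det_vandermonde_ne_zero_iff.2 hinj
  set a : Fin n → 𝕂 := W⁻¹ *ᵥ Pi.single ⟨e₀, he₀⟩ 1 with ha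
  have hWa : W *ᵥ a = Pi.single ⟨e₀, he₀⟩ 1 := by
    rw [ha, Matrix.mulVec_mulVec, Matrix.mul_nonsing_inv _ (isUnit_iff_ne_zero.2 hdet),
      Matrix.one_mulVec]
  refine ⟨a, fun e he => ?_⟩
  have := congrFun hWa ⟨e, he⟩
  rw [Matrix.mulVec, Pi.single_apply] at this
  simp only [dotProduct, hW, Matrix.of_apply] at this
  rw [show (∑ j, a j * s j ^ e) = ∑ j, s j ^ e * a j from by
    exact Finset.sum_congr rfl fun j _ => mul_comm _ _]
  rw [this]
  simp [Fin.mk.injEq, eq_comm]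

lemma myKey {𝕂 : Type} [RCLike 𝕂] (M m : ℕ) (hm : m ≤ M) (n : ℕ)
    (hn : M + (M + 1) * M < n) (s : Fin n → 𝕂) (a : Fin n → 𝕂)
    (ha : ∀ e : ℕ, e < n →
      ∑ j, a j * s j ^ e = if e = m + (M + 1) * (M - m) then 1 else 0)
    (k : ℕ) (hk : k ≤ M) (z : 𝕂) :
    ∑ j, a j * (s j * z + s j ^ (M + 1)) ^ k
      = if k = M then (M.choose m : 𝕂) * z ^ m else 0 := by
  have expand : ∀ j : Fin n, (s j * z + s j ^ (M + 1)) ^ k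
      = ∑ i ∈ Finset.range (k + 1),
          (z ^ i * (k.choose i : 𝕂)) * s j ^ (i + (M + 1) * (k - i)) := by
    intro j
    rw [add_pow]
    refine Finset.sum_congr rfl fun i hi => ?_
    rw [mul_pow, ← pow_mul, pow_add]
    ring
  have hbound : ∀ i : ℕ, i ≤ k → i + (M + 1) * (k - i) < n := by
    intro i hi
    have h1 : (M + 1) * (k - i) ≤ (M + 1) * M := Nat.mul_le_mul_left _ (by omega)
    omega
  have step1 : ∑ j, a j * (s j * z + s j ^ (M + 1)) ^ k
      = ∑ i ∈ Finset.range (k + 1), (z ^ i * (k.choose i : 𝕂)) *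
          (if i + (M + 1) * (k - i) = m + (M + 1) * (M - m) then 1 else 0) := by
    calc ∑ j, a j * (s j * z + s j ^ (M + 1)) ^ k
        = ∑ j, ∑ i ∈ Finset.range (k + 1),
            (z ^ i * (k.choose i : 𝕂)) * (a j * s j ^ (i + (M + 1) * (k - i))) := by
          refine Finset.sum_congr rfl fun j _ => ?_
          rw [expand j, Finset.mul_sum]
          exact Finset.sum_congr rfl fun i _ => by ring
      _ = ∑ i ∈ Finset.range (k + 1), (z ^ i * (k.choose i : 𝕂)) *
            ∑ j, a j * s j ^ (i + (M + 1) * (k - i)) := by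
          rw [Finset.sum_comm]
          exact Finset.sum_congr rfl fun i _ => (Finset.mul_sum _ _ _).symm
      _ = _ := by
          refine Finset.sum_congr rfl fun i hi => ?_
          rw [ha _ (hbound i (by simpa [Nat.lt_succ_iff] using hi))]
  rw [step1]
  by_cases hkM : k = M
  · rw [hkM]
    have heach : ∀ i ∈ Finset.range (M + 1), (z ^ i * (M.choose i : 𝕂)) *
        (if i + (M + 1) * (M - i) = m + (M + 1) * (M - m) then 1 else 0)
        = if i = m then (M.choose m : 𝕂) * z ^ m else 0 := by
      intro i hi
      have hi' : i ≤ M := by simpa [Nat.lt_succ_iff] using hi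
      by_cases him : i = m
      · subst him
        simp [mul_comm]
      · have hcond : ¬(i + (M + 1) * (M - i) = m + (M + 1) * (M - m)) :=
          fun h => him ((myExp_inj M m i M hm hi' le_rfl).1 h).1
        simp [hcond, him]
    rw [Finset.sum_congr rfl heach,
      Finset.sum_ite_eq' (Finset.range (M + 1)) m fun _ => (M.choose m : 𝕂) * z ^ m,
      if_pos (Finset.mem_range.2 (by omega))]
    simp
  · have heach : ∀ i ∈ Finset.range (k + 1), (z ^ i * (k.choose i : 𝕂)) *
        (if i + (M + 1) * (k - i) = m + (M + 1) * (M - m) then 1 else 0) = 0 := by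
      intro i hi
      have hi' : i ≤ k := by simpa [Nat.lt_succ_iff] using hi
      have hcond : ¬(i + (M + 1) * (k - i) = m + (M + 1) * (M - m)) :=
        fun h => hkM ((myExp_inj M m i k hm hi' hk).1 h).2
      simp [hcond]
    rw [Finset.sum_eq_zero heach, if_neg hkM]

/-- Let `σ(z) = ∑ α_k z^k` be entire on `𝕂 ∈ {ℝ, ℂ}` with `α_M ≠ 0`, and let `m ≤ M`. Then for
every `R > 0` and `ε > 0` there is a one-dimensional shallow neural network
`z ↦ ∑_k a_k σ(conj(w_k) z + b_k)` approximating `z ↦ z^m` to accuracy `ε` on `{‖z‖ ≤ R}`. -/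
theorem monomial_approx_by_shallow {𝕂 : Type} [RCLike 𝕂]
    (σ : 𝕂 → 𝕂) (α : ℕ → 𝕂) (hσ : ∀ z : 𝕂, HasSum (fun k : ℕ => α k * z ^ k) (σ z))
    (M : ℕ) (hM : α M ≠ 0) (m : ℕ) (hm : m ≤ M)
    (R ε : ℝ) (hR : 0 < R) (hε : 0 < ε) :
    ∃ (n : ℕ) (a w b : Fin n → 𝕂), 1 ≤ n ∧
      ∀ z : 𝕂, ‖z‖ ≤ R →
        ‖(∑ k, a k * σ ((starRingEnd 𝕂) (w k) * z + b k)) - z ^ m‖ ≤ ε := by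
  classical
  set n : ℕ := (M + 1) ^ 2 with hn
  have hnM : M + (M + 1) * M < n := by
    have h : (M + 1) ^ 2 = M + (M + 1) * M + 1 := by ring
    omega
  set s : Fin n → 𝕂 := fun j => ((j : ℕ) : 𝕂) + 1 with hs
  have he₀ : m + (M + 1) * (M - m) < n := by
    have h1 : (M + 1) * (M - m) ≤ (M + 1) * M := Nat.mul_le_mul_left _ (Nat.sub_le _ _)
    omega
  obtain ⟨a, ha⟩ := myVandermonde_solution (𝕂 := 𝕂) n (m + (M + 1) * (M - m)) he₀
  have ha' : ∀ e : ℕ, e < n →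
      ∑ j, a j * s j ^ e = if e = m + (M + 1) * (M - m) then 1 else 0 := ha
  -- summability constants
  have hsummable : ∀ r : ℝ, 0 ≤ r → Summable (fun k => ‖α k‖ * r ^ k) :=
    mySummable_norm α (fun z => (hσ z).summable)
  set r : Fin n → ℝ := fun j => ‖s j‖ * R + ‖s j‖ ^ (M + 1) with hrdef
  have hr0 : ∀ j, 0 ≤ r j := fun j => by
    have := norm_nonneg (s j); positivity
  have hC0 : (0 : ℝ) < (M.choose m : ℝ) := by exact_mod_cast Nat.choose_pos hm
  have hCK : ((M.choose m : ℕ) : 𝕂) ≠ 0 := by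
    exact_mod_cast Nat.cast_ne_zero.2 (Nat.choose_pos hm).ne'
  set d0 : ℝ := ‖α M‖ * (M.choose m : ℝ) with hd0
  have hd0pos : 0 < d0 := mul_pos (norm_pos_iff.2 hM) hC0
  set F : ℕ → ℝ := fun k => (∑ j, ‖a j‖ * (‖α k‖ * r j ^ k)) / d0 with hF
  have hFsummable : Summable F := by
    apply Summable.div_const
    apply summable_sum
    intro j _
    exact (hsummable (r j) (hr0 j)).mul_left _
  have hF0 : ∀ k, 0 ≤ F k := by
    intro k
    apply div_nonneg _ hd0pos.le
    apply Finset.sum_nonneg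
    intro j _
    have := hr0 j
    positivity
  set v : ℕ → ℝ := fun k => if k ≤ M then 0 else F k with hv
  have hv0 : ∀ k, 0 ≤ v k := by
    intro k
    by_cases h : k ≤ M <;> simp [hv, h, hF0 k]
  have hvsummable : Summable v := by
    apply Summable.of_nonneg_of_le hv0 (fun k => ?_) hFsummable
    by_cases h : k ≤ M <;> simp [hv, h, hF0 k]
  set V : ℝ := ∑' k, v k with hV
  have hV0 : 0 ≤ V := tsum_nonneg hv0
  set t : ℝ := min 1 (ε / (V + 1)) with ht
  have ht0 : 0 < t := lt_min one_pos (div_pos hε (by linarith))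
  have ht1 : t ≤ 1 := min_le_left _ _
  have htV : t * V ≤ ε := by
    have h1 : t * V ≤ (ε / (V + 1)) * V :=
      mul_le_mul_of_nonneg_right (min_le_right _ _) hV0
    have h2 : (ε / (V + 1)) * V ≤ ε := by
      rw [div_mul_eq_mul_div, div_le_iff₀ (by linarith : (0:ℝ) < V + 1)]
      nlinarith
    linarith
  have htK : ((t : ℝ) : 𝕂) ≠ 0 := by
    simpa using ht0.ne'
  set D : 𝕂 := α M * ((M.choose m : ℕ) : 𝕂) * ((t : ℝ) : 𝕂) ^ M with hD
  have hDnorm : ‖D‖ = d0 * t ^ M := by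
    rw [hD, norm_mul, norm_mul, RCLike.norm_natCast, norm_pow, RCLike.norm_ofReal,
      abs_of_pos ht0, hd0]
  have hD0 : D ≠ 0 := by
    rw [hD]
    exact mul_ne_zero (mul_ne_zero hM hCK) (pow_ne_zero _ htK)
  refine ⟨n, fun j => a j / D, fun j => (starRingEnd 𝕂) (((t : ℝ) : 𝕂) * s j),
    fun j => ((t : ℝ) : 𝕂) * s j ^ (M + 1), ?_, ?_⟩
  · have h : 0 < (M + 1) ^ 2 := by positivity
    omega
  intro z hz
  set c : Fin n → 𝕂 := fun j => s j * z + s j ^ (M + 1) with hc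
  have harg : ∀ j, (starRingEnd 𝕂) ((starRingEnd 𝕂) (((t : ℝ) : 𝕂) * s j)) * z
      + ((t : ℝ) : 𝕂) * s j ^ (M + 1) = ((t : ℝ) : 𝕂) * c j := by
    intro j
    rw [starRingEnd_self_apply, hc]
    ring
  set g : ℕ → 𝕂 := fun k => ∑ j, (a j / D) * (α k * (((t : ℝ) : 𝕂) * c j) ^ k) with hg
  have hgsum : HasSum g (∑ j, (a j / D) * σ (((t : ℝ) : 𝕂) * c j)) :=
    myHasSum_finset_sum Finset.univ
      (fun j k => (a j / D) * (α k * (((t : ℝ) : 𝕂) * c j) ^ k))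
      (fun j => (a j / D) * σ (((t : ℝ) : 𝕂) * c j))
      (fun j _ => (hσ _).mul_left _)
  have hgval : ∀ k, k ≤ M → g k = if k = M then z ^ m else 0 := by
    intro k hk
    have hstep : g k = (α k * ((t : ℝ) : 𝕂) ^ k / D) * ∑ j, a j * c j ^ k := by
      rw [hg, Finset.mul_sum]
      refine Finset.sum_congr rfl fun j _ => ?_
      rw [mul_pow]
      ring
    rw [hstep, myKey M m hm n hnM s a ha' k hk z]
    by_cases hkM : k = M
    · rw [hkM, if_pos rfl, if_pos rfl, hD]
      field_simp
    · rw [if_neg hkM, if_neg hkM, mul_zero]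
  set φ : ℕ → 𝕂 := fun k => if k ≤ M then g k else 0 with hφ
  have hφsum : HasSum φ (z ^ m) := by
    have h1 : HasSum φ (∑ k ∈ Finset.range (M + 1), φ k) := by
      apply hasSum_sum_of_ne_finset_zero
      intro k hk
      simp only [Finset.mem_range, not_lt] at hk
      simp [hφ, show ¬k ≤ M by omega]
    have h2 : ∑ k ∈ Finset.range (M + 1), φ k = z ^ m := by
      have heach : ∀ k ∈ Finset.range (M + 1), φ k = if k = M then z ^ m else 0 := by
        intro k hk
        have hk' : k ≤ M := by simpa [Nat.lt_succ_iff] using hk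
        rw [hφ]
        simp only [if_pos hk']
        exact hgval k hk'
      rw [Finset.sum_congr rfl heach,
        Finset.sum_ite_eq' (Finset.range (M + 1)) M fun _ => z ^ m,
        if_pos (Finset.self_mem_range_succ M)]
    rwa [h2] at h1
  have hmain : HasSum (fun k => g k - φ k)
      ((∑ j, (a j / D) * σ (((t : ℝ) : 𝕂) * c j)) - z ^ m) := hgsum.sub hφsum
  have hptbound : ∀ k, ‖g k - φ k‖ ≤ t * v k := by
    intro k
    by_cases hk : k ≤ M
    · simp [hφ, hv, hk]
    · push_neg at hk
      have hφk : φ k = 0 := if_neg (not_le.2 hk)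
      rw [hφk, sub_zero]
      have hcj : ∀ j : Fin n, ‖((t : ℝ) : 𝕂) * c j‖ ≤ t * r j := by
        intro j
        rw [norm_mul, RCLike.norm_ofReal, abs_of_pos ht0]
        refine mul_le_mul_of_nonneg_left ?_ ht0.le
        rw [hc]
        calc ‖s j * z + s j ^ (M + 1)‖ ≤ ‖s j * z‖ + ‖s j ^ (M + 1)‖ := norm_add_le _ _
          _ ≤ ‖s j‖ * R + ‖s j‖ ^ (M + 1) := by
              rw [norm_mul, norm_pow]
              exact add_le_add (mul_le_mul_of_nonneg_left hz (norm_nonneg _)) le_rfl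
          _ = r j := rfl
      calc ‖g k‖ ≤ ∑ j, ‖(a j / D) * (α k * (((t : ℝ) : 𝕂) * c j) ^ k)‖ := norm_sum_le _ _
        _ ≤ ∑ j, (‖a j‖ / (d0 * t ^ M)) * (‖α k‖ * (t * r j) ^ k) := by
            refine Finset.sum_le_sum fun j _ => ?_
            rw [norm_mul, norm_mul, norm_pow, norm_div, hDnorm]
            have h1 : ‖((t : ℝ) : 𝕂) * c j‖ ^ k ≤ (t * r j) ^ k :=
              pow_le_pow_left₀ (norm_nonneg _) (hcj j) k
            have h2 : (0:ℝ) ≤ ‖a j‖ / (d0 * t ^ M) := by positivity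
            exact mul_le_mul_of_nonneg_left
              (mul_le_mul_of_nonneg_left h1 (norm_nonneg _)) h2
        _ = (t ^ k / t ^ M) * F k := by
            have heach : ∀ j : Fin n, (‖a j‖ / (d0 * t ^ M)) * (‖α k‖ * (t * r j) ^ k)
                = (t ^ k / t ^ M) * ((‖a j‖ * (‖α k‖ * r j ^ k)) / d0) := by
              intro j
              rw [mul_pow]
              field_simp
            rw [Finset.sum_congr rfl fun j _ => heach j, ← Finset.mul_sum,
              ← Finset.sum_div]
        _ ≤ t * F k := by
            have h1 : t ^ k / t ^ M = t ^ (k - M) := (pow_sub₀ t ht0.ne' hk.le).symm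
            have h2 : t ^ (k - M) ≤ t ^ 1 := pow_le_pow_of_le_one ht0.le ht1 (by omega)
            rw [h1]
            exact mul_le_mul_of_nonneg_right (by simpa using h2) (hF0 k)
        _ = t * v k := by rw [hv]; simp [not_le.2 hk]
  have hnormle : ‖(∑ j, (a j / D) * σ (((t : ℝ) : 𝕂) * c j)) - z ^ m‖ ≤ t * V := by
    rw [← hmain.tsum_eq]
    exact tsum_of_norm_bounded (hvsummable.hasSum.mul_left t) hptbound
  calc ‖(∑ j, a j / D * σ ((starRingEnd 𝕂) ((starRingEnd 𝕂) (((t : ℝ) : 𝕂) * s j)) * z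
          + ((t : ℝ) : 𝕂) * s j ^ (M + 1))) - z ^ m‖
      = ‖(∑ j, (a j / D) * σ (((t : ℝ) : 𝕂) * c j)) - z ^ m‖ := by
        congr 2
        exact Finset.sum_congr rfl fun j _ => by rw [harg j]
    _ ≤ t * V := hnormle
    _ ≤ ε := htV
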